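/- Let i : [0,T] → ℝ≥0 be a differentiable function and let c, C > 0 be constants such that −i'(t) > (c/2) i(t)² − C for all t ∈ (0,T]. Then for every t ∈ (0,T], i(t) < √(4C/c) + 4/(c t). -/

import Mathlib

theorem stmt_8 (T c C : ℝ) (hT : 0 < T) (hc : 0 < c) (hC : 0 < C)
    (i : ℝ → ℝ) (hdiff : ∀ t ∈ Set.Icc (0 : ℝ) T, DifferentiableAt ℝ i t)
    (hnn : ∀ t ∈ Set.Icc (0 : ℝ) T, 0 ≤ i t)
    (hode : ∀ t ∈ Set.Ioc (0 : ℝ) T, -deriv i t > (c / 2) * i t ^ 2 - C) :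
    ∀ t ∈ Set.Ioc (0 : ℝ) T, i t < Real.sqrt (4 * C / c) + 4 / (c * t) := by
  have hcont : ContinuousOn i (Set.Icc 0 T) := fun s hs =>
    (hdiff s hs).continuousAt.continuousWithinAt
  intro t ht
  by_contra hcon
  push_neg at hcon
  set b := i t with hbdef
  have ht0 : 0 < t := ht.1
  have htT : t ≤ T := ht.2
  have hsqpos : 0 < Real.sqrt (4 * C / c) := Real.sqrt_pos.2 (by positivity)
  have hb0 : 0 < b := lt_of_lt_of_le (by positivity) hcon
  have hbsq : Real.sqrt (4 * C / c) < b := by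
    have h4 : 0 < 4 / (c * t) := by positivity
    linarith
  have hbsq2 : 4 * C / c ≤ b ^ 2 := by
    have := Real.sq_sqrt (show (0:ℝ) ≤ 4 * C / c by positivity)
    nlinarith [hbsq, hsqpos]
  -- key: i s ≥ b for all s ∈ (0, t]
  have key : ∀ s ∈ Set.Ioc (0:ℝ) t, b ≤ i s := by
    intro s hs
    by_contra hlt
    push_neg at hlt
    have hsub : Set.Icc s t ⊆ Set.Icc (0:ℝ) T :=
      Set.Icc_subset_Icc (le_of_lt hs.1) htT
    set m := max (i s) (Real.sqrt (2 * C / c)) with hm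
    have hsqlt : Real.sqrt (2 * C / c) < Real.sqrt (4 * C / c) := by
      apply Real.sqrt_lt_sqrt (by positivity)
      have : 0 < C / c := by positivity
      rw [div_lt_div_iff₀ hc hc]; nlinarith
    have hmb : m < b := max_lt hlt (lt_trans hsqlt hbsq)
    -- S : points in [s,t] where i ≤ m
    set S := Set.Icc s t ∩ i ⁻¹' Set.Iic m with hS
    have hSne : S.Nonempty := ⟨s, ⟨le_refl s, hs.2⟩, Set.mem_preimage.2 (Set.mem_Iic.2 (le_max_left _ _))⟩
    have hSbdd : BddAbove S := ⟨t, fun u hu => hu.1.2⟩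
    have hSclosed : IsClosed S := by
      apply (hcont.mono hsub).preimage_isClosed_of_isClosed isClosed_Icc isClosed_Iic
    set s1 := sSup S with hs1
    have hs1mem : s1 ∈ S := hSclosed.csSup_mem hSne hSbdd
    have hs1i : i s1 ≤ m := hs1mem.2
    have hs1t : s1 < t := by
      rcases lt_or_eq_of_le hs1mem.1.2 with h | h
      · exact h
      · exfalso; rw [h] at hs1i; exact absurd hs1i (not_le.2 hmb)
    have hs1s : s ≤ s1 := hs1mem.1.1
    have hs10 : 0 < s1 := lt_of_lt_of_le hs.1 hs1s
    -- on (s1, t], i > m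
    have hbig : ∀ u, s1 < u → u ≤ t → m < i u := by
      intro u h1 h2
      by_contra hle
      push_neg at hle
      have : u ∈ S := ⟨⟨le_trans hs1s (le_of_lt h1), h2⟩, hle⟩
      exact absurd (le_csSup hSbdd this) (not_le.2 h1)
    -- i strictly decreasing on [s1, t]
    have hanti : StrictAntiOn i (Set.Icc s1 t) := by
      apply strictAntiOn_of_deriv_neg (convex_Icc s1 t)
      · exact hcont.mono (Set.Icc_subset_Icc (le_of_lt hs10) htT)
      · intro u hu
        rw [interior_Icc] at hu
        have huIoc : u ∈ Set.Ioc (0:ℝ) T :=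
          ⟨lt_trans hs10 hu.1, le_trans hu.2.le htT⟩
        have hiu : Real.sqrt (2 * C / c) < i u :=
          lt_of_le_of_lt (le_max_right _ _) (hbig u hu.1 hu.2.le)
        have hiu2 : 2 * C / c < i u ^ 2 := by
          have h1 := Real.sq_sqrt (show (0:ℝ) ≤ 2 * C / c by positivity)
          have h2 : 0 ≤ Real.sqrt (2 * C / c) := Real.sqrt_nonneg _
          nlinarith
        have hode' := hode u huIoc
        have : C < c / 2 * i u ^ 2 := by
          rw [div_lt_iff₀ hc] at hiu2; nlinarith
        linarith
    have : i t < i s1 := hanti ⟨le_refl s1, hs1t.le⟩ ⟨hs1t.le, le_refl t⟩ hs1t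
    have : b < m := lt_of_lt_of_le this hs1i
    linarith
  -- now integrate (1/i)' > c/4 on [ε, t]
  have main : ∀ ε, 0 < ε → ε < t → b⁻¹ > c / 4 * t - c / 4 * ε := by
    intro ε hε hεt
    have hsub : Set.Icc ε t ⊆ Set.Icc (0:ℝ) T := Set.Icc_subset_Icc hε.le htT
    have hipos : ∀ u ∈ Set.Icc ε t, 0 < i u := fun u hu =>
      lt_of_lt_of_le hb0 (key u ⟨lt_of_lt_of_le hε hu.1, hu.2⟩)
    set g := fun u => (i u)⁻¹ - c / 4 * u with hg
    have hmono : StrictMonoOn g (Set.Icc ε t) := by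
      apply strictMonoOn_of_deriv_pos (convex_Icc ε t)
      · apply ContinuousOn.sub
        · exact ((hcont.mono hsub).inv₀ (fun u hu => (hipos u hu).ne'))
        · exact (continuous_const.mul continuous_id).continuousOn
      · intro u hu
        rw [interior_Icc] at hu
        have huIcc : u ∈ Set.Icc ε t := ⟨hu.1.le, hu.2.le⟩
        have hiu : 0 < i u := hipos u huIcc
        have hdu : DifferentiableAt ℝ i u := hdiff u (hsub huIcc)
        have hder : HasDerivAt g (-deriv i u / i u ^ 2 - c / 4) u := by
          have h1 : HasDerivAt (fun x => (i x)⁻¹) (-deriv i u / i u ^ 2) u :=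
            hdu.hasDerivAt.inv hiu.ne'
          have h2 : HasDerivAt (fun x => c / 4 * x) (c / 4) u := by
            simpa using (hasDerivAt_id u).const_mul (c / 4)
          exact h1.sub h2
        rw [hder.deriv]
        have huIoc : u ∈ Set.Ioc (0:ℝ) T := ⟨lt_of_lt_of_le hε hu.1.le, hu.2.le.trans htT⟩
        have hode' := hode u huIoc
        have hib : b ≤ i u := key u ⟨huIoc.1, hu.2.le⟩
        have hiu2 : 4 * C / c ≤ i u ^ 2 := le_trans hbsq2 (by nlinarith)
        have hCle : C ≤ c / 4 * i u ^ 2 := by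
          rw [div_le_iff₀ hc] at hiu2; nlinarith
        have hkey : c / 4 * i u ^ 2 < -deriv i u := by nlinarith
        have : c / 4 < -deriv i u / i u ^ 2 := by
          rw [lt_div_iff₀ (by positivity)]; nlinarith
        linarith
    have hlt : g ε < g t := hmono ⟨le_refl ε, hεt.le⟩ ⟨hεt.le, le_refl t⟩ hεt
    have hiε : 0 < i ε := hipos ε ⟨le_refl ε, hεt.le⟩
    have hinv : 0 < (i ε)⁻¹ := by positivity
    simp only [hg] at hlt
    have : b⁻¹ = (i t)⁻¹ := by rw [hbdef]
    rw [this]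
    linarith
  -- conclude: b⁻¹ ≥ c t / 4
  have hfin : c / 4 * t ≤ b⁻¹ := by
    by_contra hno
    push_neg at hno
    have hδ0 : 0 < c / 4 * t - b⁻¹ := by linarith
    obtain ⟨ε, hε0, hεt, hεle⟩ :
        ∃ ε, 0 < ε ∧ ε < t ∧ c / 4 * ε ≤ (c / 4 * t - b⁻¹) / 2 := by
      refine ⟨min (t / 2) ((c / 4 * t - b⁻¹) * 2 / c), ?_, ?_, ?_⟩
      · exact lt_min (by linarith) (by positivity)
      · exact lt_of_le_of_lt (min_le_left _ _) (by linarith)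
      · have h2 : min (t / 2) ((c / 4 * t - b⁻¹) * 2 / c) ≤ (c / 4 * t - b⁻¹) * 2 / c :=
          min_le_right _ _
        rw [le_div_iff₀ hc] at h2
        nlinarith
    have h1 := main ε hε0 hεt
    linarith
  have hble : b ≤ 4 / (c * t) := by
    rw [le_div_iff₀ (by positivity)]
    have h : c / 4 * t * b ≤ b⁻¹ * b := mul_le_mul_of_nonneg_right hfin hb0.le
    rw [inv_mul_cancel₀ hb0.ne'] at h
    nlinarith
  linarith
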